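/- Let β, λ_1, λ_2 ∈ ℝ and let h(w) = ∑_{n≥2} a_n w^{n+1} with real coefficients satisfying ∑_{n≥2} n³|a_n| < ∞. Define the explicit linear operator L[β](λ_1, λ_2, h)(θ) := (1/2)λ_1 + λ_2 cos θ + (β/4)·∂_θ H[s ↦ Re(e^{is}h''(e^{is}))](θ) − (β/4)·∂_θ H[s ↦ Re(h'(e^{is}))](θ) − (1/2)·∂_θ H[s ↦ Re(e^{−is}h(e^{is}))](θ) + (1/2)·Re[e^{iθ}·conj(h(e^{iθ}))]. Then for every θ, L[β](λ_1, λ_2, h)(θ) = (1/2)λ_1 + λ_2 cos θ + (1/4)∑_{n≥2} a_n n(n+1)(n−1)(β − β_n) cos(nθ), where β_n := 2/(n(n+1)). -/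

import Mathlib

open Real Filter MeasureTheory Set

set_option maxHeartbeats 1000000

/-- The point `w = e^{iθ}` on the unit circle. -/
noncomputable def wc (θ : ℝ) : ℂ := Complex.exp (θ * Complex.I)

/-- `h(w) = ∑_{n≥2} a_n w^{n+1}` at `w = e^{iθ}`. -/
noncomputable def hMap (a : ℕ → ℝ) (θ : ℝ) : ℂ :=
  ∑' n : ℕ, (a n : ℂ) * wc θ ^ (n + 1)

/-- `h'(w) = ∑_{n≥2} a_n (n+1) w^n` at `w = e^{iθ}`. -/
noncomputable def hD (a : ℕ → ℝ) (θ : ℝ) : ℂ :=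
  ∑' n : ℕ, (a n : ℂ) * ((n : ℂ) + 1) * wc θ ^ n

/-- `h''(w) = ∑_{n≥2} a_n (n+1) n w^{n-1}` at `w = e^{iθ}`. -/
noncomputable def hDD (a : ℕ → ℝ) (θ : ℝ) : ℂ :=
  ∑' n : ℕ, (a n : ℂ) * ((n : ℂ) + 1) * (n : ℂ) * wc θ ^ (n - 1)

/-- The periodic Hilbert transform
`H[g](θ) = (1/(2π)) p.v. ∫₀^{2π} g(s) cot((θ-s)/2) ds`. -/
noncomputable def hilbertT (g : ℝ → ℝ) (θ : ℝ) : ℝ :=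
  (1 / (2 * π)) *
    limUnder (nhdsWithin (0 : ℝ) (Ioi 0)) (fun δ : ℝ =>
      ∫ s in {s : ℝ | s ∈ Icc 0 (2 * π) ∧ δ ≤ |Real.sin ((θ - s) / 2)|},
        g s * Real.cot ((θ - s) / 2))


lemma dirichlet_aux (n : ℕ) (u : ℝ) :
    Real.sin ((n + 1 : ℝ) * u) * Real.cos (u / 2)
      = Real.sin (u / 2) * (1 + Real.cos ((n + 1 : ℝ) * u))
        + 2 * Real.sin (u / 2) * ∑ k ∈ Finset.Ico 1 (n + 1), Real.cos ((k : ℝ) * u) := by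
  induction n with
  | zero =>
      have h1 : (0 + 1 : ℝ) * u = 2 * (u / 2) := by ring
      simp only [Nat.cast_zero, h1, Real.sin_two_mul, Real.cos_two_mul]
      simp [Finset.Ico_self]
      ring
  | succ m ih =>
      have hstep : ((m + 1 : ℕ) + 1 : ℝ) * u = (m + 1 : ℝ) * u + u := by push_cast; ring
      have hsum : ∑ k ∈ Finset.Ico 1 (m + 1 + 1), Real.cos ((k : ℝ) * u)
          = (∑ k ∈ Finset.Ico 1 (m + 1), Real.cos ((k : ℝ) * u)) + Real.cos ((m + 1 : ℝ) * u) := by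
        rw [Finset.sum_Ico_succ_top (by omega)]
        push_cast; ring_nf; simp only [mul_comm, add_comm]
      push_cast
      push_cast at hstep hsum ih
      rw [hstep, hsum, Real.sin_add, Real.cos_add]
      have hsin : Real.sin u = 2 * Real.sin (u/2) * Real.cos (u/2) := by
        rw [show u = 2 * (u/2) by ring, Real.sin_two_mul]; ring_nf
      have hcos : Real.cos u = 2 * Real.cos (u/2) ^ 2 - 1 := by
        rw [show u = 2 * (u/2) by ring, Real.cos_two_mul]; ring_nf
      rw [hsin, hcos]
      have pyth := Real.sin_sq_add_cos_sq (u/2)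
      linear_combination ih + 2 * Real.sin ((m+1:ℝ)*u) * Real.cos (u/2) * pyth

/-- Closed form of `∫_ε^π sin(nu) cot(u/2) du`. -/
noncomputable def psiK (n : ℕ) (ε : ℝ) : ℝ :=
  (π - ε) + (Real.sin ((n : ℝ) * π) - Real.sin ((n : ℝ) * ε)) / n
    + 2 * ∑ k ∈ Finset.Ico 1 n, (Real.sin ((k : ℝ) * π) - Real.sin ((k : ℝ) * ε)) / k

lemma integral_cos_freq (k : ℕ) (hk : 1 ≤ k) (a b : ℝ) :
    ∫ u in a..b, Real.cos ((k : ℝ) * u) = (Real.sin ((k : ℝ) * b) - Real.sin ((k : ℝ) * a)) / k := by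
  have hk' : (k : ℝ) ≠ 0 := by positivity
  rw [intervalIntegral.integral_comp_mul_left (fun x => Real.cos x) hk', integral_cos]
  simp [smul_eq_mul]
  ring

lemma integral_dirichlet (n : ℕ) {ε : ℝ} (hε : 0 < ε) (hεπ : ε ≤ π) :
    ∫ u in ε..π, Real.sin (((n : ℝ) + 1) * u) * (Real.cos (u / 2) / Real.sin (u / 2))
      = psiK (n + 1) ε := by
  have heq : EqOn (fun u => Real.sin (((n : ℝ) + 1) * u) * (Real.cos (u / 2) / Real.sin (u / 2)))
      (fun u => 1 + Real.cos (((n : ℝ) + 1) * u)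
        + 2 * ∑ k ∈ Finset.Ico 1 (n + 1), Real.cos ((k : ℝ) * u)) (uIcc ε π) := by
    intro u hu
    rw [uIcc_of_le hεπ] at hu
    have hs : Real.sin (u / 2) ≠ 0 := by
      have h1 : 0 < u / 2 := by linarith [hu.1]
      have h2 : u / 2 < π := by
        have := hu.2; nlinarith [Real.pi_pos]
      exact ne_of_gt (Real.sin_pos_of_pos_of_lt_pi h1 h2)
    have := dirichlet_aux n u
    field_simp
    push_cast at this ⊢
    have hS : ∑ k ∈ Finset.Ico 1 (n + 1), Real.cos ((k : ℝ) * u)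
        = ∑ k ∈ Finset.Ico 1 (n + 1), Real.cos (u * (k : ℝ)) :=
      Finset.sum_congr rfl fun k _ => by rw [mul_comm]
    linear_combination this + 2 * Real.sin (u / 2) * hS
  rw [intervalIntegral.integral_congr heq]
  have hint1 : IntervalIntegrable (fun u : ℝ => 1 + Real.cos (((n : ℝ) + 1) * u)) volume ε π :=
    (by fun_prop : Continuous fun u : ℝ => 1 + Real.cos (((n : ℝ) + 1) * u)).intervalIntegrable _ _
  have hcontsum : Continuous fun u : ℝ => ∑ k ∈ Finset.Ico 1 (n + 1), Real.cos ((k : ℝ) * u) :=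
    continuous_finset_sum _ fun k _ => Real.continuous_cos.comp (continuous_const.mul continuous_id)
  have hint2 : IntervalIntegrable
      (fun u : ℝ => 2 * ∑ k ∈ Finset.Ico 1 (n + 1), Real.cos ((k : ℝ) * u)) volume ε π :=
    (continuous_const.mul hcontsum).intervalIntegrable ε π
  rw [intervalIntegral.integral_add hint1 hint2]
  have h1 : ∫ u in ε..π, (1 + Real.cos (((n : ℝ) + 1) * u))
      = (π - ε) + (Real.sin (((n : ℝ) + 1) * π) - Real.sin (((n : ℝ) + 1) * ε)) / ((n : ℝ) + 1) := by
    rw [intervalIntegral.integral_add (intervalIntegrable_const)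
      ((by fun_prop : Continuous fun u : ℝ => Real.cos (((n : ℝ) + 1) * u)).intervalIntegrable _ _)]
    have := integral_cos_freq (n + 1) (by omega) ε π
    push_cast at this
    rw [this]
    simp
  have h2 : ∫ u in ε..π, 2 * ∑ k ∈ Finset.Ico 1 (n + 1), Real.cos ((k : ℝ) * u)
      = 2 * ∑ k ∈ Finset.Ico 1 (n + 1), (Real.sin ((k : ℝ) * π) - Real.sin ((k : ℝ) * ε)) / k := by
    rw [intervalIntegral.integral_const_mul]
    congr 1
    rw [intervalIntegral.integral_finset_sum (μ := volume) (a := ε) (b := π)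
      (f := fun (k : ℕ) (u : ℝ) => Real.cos ((k : ℝ) * u)) (fun k _ =>
      (Real.continuous_cos.comp (continuous_const.mul continuous_id)).intervalIntegrable ε π)]
    exact Finset.sum_congr rfl fun k hk =>
      integral_cos_freq k (Finset.mem_Ico.mp hk).1 ε π
  rw [h1, h2]
  simp only [psiK]
  push_cast
  ring

lemma psiK_tendsto (n : ℕ) :
    Tendsto (fun δ : ℝ => psiK n (2 * Real.arcsin δ)) (nhdsWithin 0 (Ioi 0)) (nhds π) := by
  have hpsi : Continuous (psiK n) := by
    unfold psiK
    apply Continuous.add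
    apply Continuous.add
    · fun_prop
    · fun_prop
    · exact continuous_const.mul (continuous_finset_sum _ fun k _ => by fun_prop)
  have hc : Continuous fun δ : ℝ => psiK n (2 * Real.arcsin δ) :=
    hpsi.comp (continuous_const.mul Real.continuous_arcsin)
  have h0 : psiK n (2 * Real.arcsin 0) = π := by
    simp [psiK, Real.arcsin_zero, Real.sin_nat_mul_pi]
  have := hc.tendsto 0
  rw [h0] at this
  exact this.mono_left nhdsWithin_le_nhds

lemma psiK_bound (n : ℕ) {ε : ℝ} (h0 : 0 ≤ ε) (hπ : ε ≤ π) :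
    |psiK n ε| ≤ π + 2 + 4 * n := by
  unfold psiK
  have h1 : |π - ε| ≤ π := by
    rw [abs_of_nonneg (by linarith)]; linarith
  have key : ∀ m : ℕ, 1 ≤ m → |(Real.sin ((m : ℝ) * π) - Real.sin ((m : ℝ) * ε)) / m| ≤ 2 := by
    intro m hm
    have hm1 : (1 : ℝ) ≤ m := by exact_mod_cast hm
    rw [abs_div, abs_of_nonneg (by positivity : (0:ℝ) ≤ (m:ℝ))]
    have hnum : |Real.sin ((m : ℝ) * π) - Real.sin ((m : ℝ) * ε)| ≤ 2 := by
      have := abs_sub_abs_le_abs_sub (Real.sin ((m : ℝ) * π)) (Real.sin ((m : ℝ) * ε))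
      have h1 := Real.abs_sin_le_one ((m : ℝ) * π)
      have h2 := Real.abs_sin_le_one ((m : ℝ) * ε)
      calc |Real.sin ((m : ℝ) * π) - Real.sin ((m : ℝ) * ε)|
          ≤ |Real.sin ((m : ℝ) * π)| + |Real.sin ((m : ℝ) * ε)| := abs_sub _ _
        _ ≤ 2 := by linarith
    calc |Real.sin ((m : ℝ) * π) - Real.sin ((m : ℝ) * ε)| / m ≤ 2 / m := by
          apply div_le_div_of_nonneg_right hnum (by linarith) |>.trans_eq rfl
      _ ≤ 2 := by
          rw [div_le_iff₀ (by linarith)]; nlinarith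
  have h2 : |(Real.sin ((n : ℝ) * π) - Real.sin ((n : ℝ) * ε)) / n| ≤ 2 := by
    rcases Nat.eq_zero_or_pos n with rfl | hn
    · simp
    · exact key n hn
  have h3 : |∑ k ∈ Finset.Ico 1 n, (Real.sin ((k : ℝ) * π) - Real.sin ((k : ℝ) * ε)) / k|
      ≤ 2 * n := by
    calc |∑ k ∈ Finset.Ico 1 n, (Real.sin ((k : ℝ) * π) - Real.sin ((k : ℝ) * ε)) / k|
        ≤ ∑ k ∈ Finset.Ico 1 n, |(Real.sin ((k : ℝ) * π) - Real.sin ((k : ℝ) * ε)) / k| :=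
          Finset.abs_sum_le_sum_abs _ _
      _ ≤ ∑ k ∈ Finset.Ico 1 n, 2 := Finset.sum_le_sum fun k hk => key k (Finset.mem_Ico.mp hk).1
      _ = 2 * (n - 1 : ℕ) := by rw [Finset.sum_const, Nat.card_Ico]; push_cast [mul_comm]; ring
      _ ≤ 2 * n := by
          have : ((n - 1 : ℕ) : ℝ) ≤ n := by
            have := Nat.sub_le n 1; exact_mod_cast this
          linarith
  calc |((π - ε) + (Real.sin ((n : ℝ) * π) - Real.sin ((n : ℝ) * ε)) / n
      + 2 * ∑ k ∈ Finset.Ico 1 n, (Real.sin ((k : ℝ) * π) - Real.sin ((k : ℝ) * ε)) / k)|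
      ≤ |π - ε| + |(Real.sin ((n : ℝ) * π) - Real.sin ((n : ℝ) * ε)) / n|
        + 2 * |∑ k ∈ Finset.Ico 1 n, (Real.sin ((k : ℝ) * π) - Real.sin ((k : ℝ) * ε)) / k| := by
        have := abs_add_le ((π - ε) + (Real.sin ((n : ℝ) * π) - Real.sin ((n : ℝ) * ε)) / n)
          (2 * ∑ k ∈ Finset.Ico 1 n, (Real.sin ((k : ℝ) * π) - Real.sin ((k : ℝ) * ε)) / k)
        have h4 := abs_add_le (π - ε) ((Real.sin ((n : ℝ) * π) - Real.sin ((n : ℝ) * ε)) / n)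
        rw [abs_mul, abs_two] at this
        linarith
    _ ≤ π + 2 + 4 * n := by linarith




lemma cot_measurable : Measurable Real.cot := by
  have : Real.cot = fun x => Real.cos x / Real.sin x := funext fun x => Real.cot_eq_cos_div_sin x
  rw [this]
  exact Real.measurable_cos.div Real.measurable_sin

noncomputable def kerI (n : ℕ) (θ δ : ℝ) : ℝ :=
  ∫ s in {s : ℝ | s ∈ Icc 0 (2 * π) ∧ δ ≤ |Real.sin ((θ - s) / 2)|},
    Real.cos ((n : ℝ) * s) * Real.cot ((θ - s) / 2)

lemma kerI_eq (n : ℕ) (θ : ℝ) {δ : ℝ} (hδ0 : 0 < δ) (hδ1 : δ < 1) :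
    kerI n θ δ = 2 * Real.sin ((n : ℝ) * θ) *
      ∫ u in (2 * Real.arcsin δ)..π,
        Real.sin ((n : ℝ) * u) * (Real.cos (u / 2) / Real.sin (u / 2)) := by
  set ε := 2 * Real.arcsin δ with hεdef
  have harc : Real.sin (ε / 2) = δ := by
    rw [show ε / 2 = Real.arcsin δ by rw [hεdef]; ring]
    exact Real.sin_arcsin (by linarith) hδ1.le
  have hε0 : 0 < ε := by
    have := Real.arcsin_pos.mpr hδ0; rw [hεdef]; linarith
  have hεπ : ε < π := by
    have := Real.arcsin_lt_pi_div_two.mpr hδ1; rw [hεdef]; linarith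
  have hcond_out : ∀ u : ℝ, ε ≤ u → u ≤ π → δ ≤ |Real.sin (u / 2)| := by
    intro u h1 h2
    have hpos : 0 ≤ Real.sin (u / 2) :=
      Real.sin_nonneg_of_nonneg_of_le_pi (by linarith) (by linarith [Real.pi_pos])
    rw [abs_of_nonneg hpos, ← harc]
    exact Real.strictMonoOn_sin.monotoneOn
      ⟨by linarith [Real.pi_pos], by linarith⟩ ⟨by linarith [Real.pi_pos], by linarith⟩
      (by linarith)
  have hcond_in : ∀ u : ℝ, -ε < u → u < ε → ¬ (δ ≤ |Real.sin (u / 2)|) := by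
    intro u h1 h2
    push_neg
    have habs : |Real.sin (u / 2)| = Real.sin (|u| / 2) := by
      rcases le_or_gt 0 u with hu | hu
      · rw [abs_of_nonneg hu,
          abs_of_nonneg (Real.sin_nonneg_of_nonneg_of_le_pi (by linarith)
            (by linarith [Real.pi_pos]))]
      · rw [abs_of_neg hu, abs_of_nonpos (Real.sin_nonpos_of_nonpos_of_neg_pi_le (by linarith)
          (by linarith [Real.pi_pos]))]
        rw [show -u / 2 = -(u / 2) by ring, Real.sin_neg]
    rw [habs, ← harc]
    have habslt : |u| < ε := abs_lt.mpr ⟨h1, h2⟩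
    exact Real.strictMonoOn_sin
      ⟨by linarith [abs_nonneg u, Real.pi_pos], by linarith⟩
      ⟨by linarith [Real.pi_pos], by linarith⟩ (by linarith)
  set G : ℝ → ℝ := fun s =>
    if δ ≤ |Real.sin ((θ - s) / 2)| then Real.cos ((n : ℝ) * s) * Real.cot ((θ - s) / 2) else 0
    with hGdef
  have hTmeas : MeasurableSet {s : ℝ | δ ≤ |Real.sin ((θ - s) / 2)|} :=
    measurableSet_le measurable_const
      ((Real.measurable_sin.comp ((measurable_const.sub measurable_id).div_const 2)).abs)
  have hGmeas : Measurable G := by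
    apply Measurable.ite hTmeas ?_ measurable_const
    exact (Real.measurable_cos.comp (measurable_id.const_mul _)).mul
      (cot_measurable.comp ((measurable_const.sub measurable_id).div_const 2))
  have hGb : ∀ s, ‖G s‖ ≤ δ⁻¹ := by
    intro s
    rw [Real.norm_eq_abs]
    show |if δ ≤ |Real.sin ((θ - s) / 2)| then
      Real.cos ((n : ℝ) * s) * Real.cot ((θ - s) / 2) else 0| ≤ δ⁻¹
    split_ifs with h
    · rw [abs_mul, Real.cot_eq_cos_div_sin, abs_div]
      have h1 : |Real.cos ((θ - s) / 2)| / |Real.sin ((θ - s) / 2)| ≤ 1 / δ :=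
        div_le_div₀ zero_le_one (Real.abs_cos_le_one _) hδ0 h
      calc |Real.cos ((n : ℝ) * s)| * (|Real.cos ((θ - s) / 2)| / |Real.sin ((θ - s) / 2)|)
          ≤ 1 * (1 / δ) := by
            apply mul_le_mul (Real.abs_cos_le_one _) h1 (by positivity) zero_le_one
        _ = δ⁻¹ := by rw [one_mul, one_div]
    · rw [abs_zero]; positivity
  -- step 1 : kerI as an integral of G over Icc
  have step1 : kerI n θ δ = ∫ s in Icc 0 (2 * π), G s := by
    unfold kerI
    rw [show {s : ℝ | s ∈ Icc 0 (2 * π) ∧ δ ≤ |Real.sin ((θ - s) / 2)|}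
        = Icc 0 (2 * π) ∩ {s : ℝ | δ ≤ |Real.sin ((θ - s) / 2)|} by ext s; simp [mem_setOf_eq]]
    rw [← setIntegral_indicator hTmeas]
    apply setIntegral_congr_fun measurableSet_Icc
    intro s _
    rw [hGdef, Set.indicator_apply]
    simp [mem_setOf_eq]
  -- step 2 : over interval 0 .. 2π
  have step2 : ∫ s in Icc 0 (2 * π), G s = ∫ s in (0 : ℝ)..(2 * π), G s := by
    rw [integral_Icc_eq_integral_Ioc, intervalIntegral.integral_of_le (by positivity)]
  -- step 3 : periodicity
  have hper : Function.Periodic G (2 * π) := by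
    intro s
    rw [hGdef]
    have harg : (θ - (s + 2 * π)) / 2 = (θ - s) / 2 - π := by ring
    simp only [harg, Real.sin_sub_pi, abs_neg]
    have hcot : Real.cot ((θ - s) / 2 - π) = Real.cot ((θ - s) / 2) := by
      rw [Real.cot_eq_cos_div_sin, Real.cot_eq_cos_div_sin, Real.cos_sub_pi, Real.sin_sub_pi,
        neg_div_neg_eq]
    have hcos : Real.cos ((n : ℝ) * (s + 2 * π)) = Real.cos ((n : ℝ) * s) := by
      rw [show (n : ℝ) * (s + 2 * π) = (n : ℝ) * s + n * (2 * π) by ring,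
        Real.cos_add_nat_mul_two_pi]
    rw [hcot, hcos]
  have step3 : ∫ s in (0 : ℝ)..(2 * π), G s = ∫ s in (θ - π)..(θ + π), G s := by
    have := hper.intervalIntegral_add_eq 0 (θ - π)
    rw [zero_add, show θ - π + 2 * π = θ + π by ring] at this
    exact this
  -- step 4 : reflection
  have step4 : ∫ s in (θ - π)..(θ + π), G s = ∫ u in (-π)..π, G (θ - u) := by
    rw [intervalIntegral.integral_comp_sub_left G θ, sub_neg_eq_add]
  set Q : ℝ → ℝ := fun u => G (θ - u) with hQdef
  have hQint : ∀ (f : ℝ → ℝ), Measurable f → (∀ u, ‖f u‖ ≤ δ⁻¹) →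
      ∀ a b : ℝ, IntervalIntegrable f volume a b := by
    intro f hfm hfb a b
    rw [intervalIntegrable_iff]
    apply Measure.integrableOn_of_bounded
    · rw [Set.uIoc]; exact (measure_Ioc_lt_top).ne
    · exact hfm.aestronglyMeasurable
    · exact ae_of_all _ hfb
  have hQmeas : Measurable Q := hGmeas.comp (measurable_const.sub measurable_id)
  have hQb : ∀ u, ‖Q u‖ ≤ δ⁻¹ := fun u => hGb _
  have hQnegmeas : Measurable (fun u => Q (-u)) := hQmeas.comp measurable_neg
  have hQnegb : ∀ u, ‖Q (-u)‖ ≤ δ⁻¹ := fun u => hGb _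
  -- step 5 : splitting
  have step5 : ∫ u in (-π)..π, Q u
      = (∫ u in (-π)..(-ε), Q u) + (∫ u in (-ε)..ε, Q u) + ∫ u in ε..π, Q u := by
    rw [intervalIntegral.integral_add_adjacent_intervals
        (hQint Q hQmeas hQb _ _) (hQint Q hQmeas hQb _ _),
      intervalIntegral.integral_add_adjacent_intervals
        (hQint Q hQmeas hQb _ _) (hQint Q hQmeas hQb _ _)]
  -- step 6 : middle vanishes
  have step6 : ∫ u in (-ε)..ε, Q u = 0 := by
    rw [intervalIntegral.integral_of_le (by linarith), integral_Ioc_eq_integral_Ioo]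
    apply setIntegral_eq_zero_of_forall_eq_zero
    intro u hu
    rw [hQdef]
    show G (θ - u) = 0
    rw [hGdef]
    show (if δ ≤ |Real.sin ((θ - (θ - u)) / 2)| then _ else 0) = 0
    rw [show θ - (θ - u) = u by ring]
    exact if_neg (hcond_in u hu.1 hu.2)
  -- step 7 : right piece
  have step7 : ∫ u in ε..π, Q u
      = ∫ u in ε..π, Real.cos ((n : ℝ) * (θ - u)) * Real.cot (u / 2) := by
    apply intervalIntegral.integral_congr
    intro u hu
    rw [uIcc_of_le hεπ.le] at hu
    show G (θ - u) = _
    rw [hGdef]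
    show (if δ ≤ |Real.sin ((θ - (θ - u)) / 2)| then
      Real.cos ((n : ℝ) * (θ - u)) * Real.cot ((θ - (θ - u)) / 2) else 0) = _
    rw [show θ - (θ - u) = u by ring]
    exact if_pos (hcond_out u hu.1 hu.2)
  have hL : ∫ u in (-π)..(-ε), Q u = ∫ u in ε..π, Q (-u) :=
    (intervalIntegral.integral_comp_neg (fun x => Q x) (a := ε) (b := π)).symm
  have hQnegint : IntervalIntegrable (fun u => Q (-u)) volume ε π :=
    hQint _ hQnegmeas hQnegb ε π
  have hQint' : IntervalIntegrable Q volume ε π := hQint Q hQmeas hQb ε π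
  have step9 : kerI n θ δ = ∫ u in ε..π, (Q (-u) + Q u) := by
    rw [step1, step2, step3, step4]
    show ∫ u in (-π)..π, Q u = _
    rw [step5, step6, add_zero, hL, ← intervalIntegral.integral_add hQnegint hQint']
  have step10 : ∫ u in ε..π, (Q (-u) + Q u)
      = ∫ u in ε..π, 2 * Real.sin ((n : ℝ) * θ) *
          (Real.sin ((n : ℝ) * u) * (Real.cos (u / 2) / Real.sin (u / 2))) := by
    apply intervalIntegral.integral_congr
    intro u hu
    rw [uIcc_of_le hεπ.le] at hu
    show Q (-u) + Q u = 2 * Real.sin ((n : ℝ) * θ) *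
          (Real.sin ((n : ℝ) * u) * (Real.cos (u / 2) / Real.sin (u / 2)))
    have e8 : Q (-u) = Real.cos ((n : ℝ) * (θ + u)) * Real.cot (-(u / 2)) := by
      show G (θ - -u) = _
      rw [hGdef]
      show (if δ ≤ |Real.sin ((θ - (θ - -u)) / 2)| then
        Real.cos ((n : ℝ) * (θ - -u)) * Real.cot ((θ - (θ - -u)) / 2) else 0) = _
      rw [show θ - (θ - -u) = -(u / 2) * 2 by ring, show θ - -u = θ + u by ring,
        show (-(u / 2) * 2) / 2 = -(u / 2) by ring]
      rw [if_pos (show δ ≤ |Real.sin (-(u / 2))| from by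
        rw [Real.sin_neg, abs_neg]; exact hcond_out u hu.1 hu.2)]
    have e7 : Q u = Real.cos ((n : ℝ) * (θ - u)) * Real.cot (u / 2) := by
      show G (θ - u) = _
      rw [hGdef]
      show (if δ ≤ |Real.sin ((θ - (θ - u)) / 2)| then
        Real.cos ((n : ℝ) * (θ - u)) * Real.cot ((θ - (θ - u)) / 2) else 0) = _
      rw [show θ - (θ - u) = u by ring]
      exact if_pos (hcond_out u hu.1 hu.2)
    rw [e8, e7, Real.cot_eq_cos_div_sin, Real.cot_eq_cos_div_sin, Real.cos_neg, Real.sin_neg,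
      show (n : ℝ) * (θ + u) = (n : ℝ) * θ + (n : ℝ) * u by ring,
      show (n : ℝ) * (θ - u) = (n : ℝ) * θ - (n : ℝ) * u by ring,
      Real.cos_add, Real.cos_sub]
    ring
  rw [step9, step10, intervalIntegral.integral_const_mul]


lemma kerI_closed (n : ℕ) (θ : ℝ) {δ : ℝ} (hδ0 : 0 < δ) (hδ1 : δ < 1) :
    kerI n θ δ = 2 * Real.sin ((n : ℝ) * θ) * psiK n (2 * Real.arcsin δ) := by
  have hε0 : 0 < 2 * Real.arcsin δ := by
    have := Real.arcsin_pos.mpr hδ0; linarith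
  have hεπ : 2 * Real.arcsin δ ≤ π := by
    have := Real.arcsin_lt_pi_div_two.mpr hδ1; linarith
  rw [kerI_eq n θ hδ0 hδ1]
  rcases n with _ | m
  · simp
  · congr 1
    have := integral_dirichlet m hε0 hεπ
    push_cast at this ⊢
    rw [this]

lemma kerI_bound (n : ℕ) (θ : ℝ) {δ : ℝ} (hδ0 : 0 < δ) (hδ1 : δ < 1) :
    |kerI n θ δ| ≤ 2 * (π + 2 + 4 * n) := by
  have hε0 : 0 ≤ 2 * Real.arcsin δ := by
    have := Real.arcsin_pos.mpr hδ0; linarith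
  have hεπ : 2 * Real.arcsin δ ≤ π := by
    have := Real.arcsin_lt_pi_div_two.mpr hδ1; linarith
  rw [kerI_closed n θ hδ0 hδ1, abs_mul, abs_mul, abs_two]
  have h1 := Real.abs_sin_le_one ((n : ℝ) * θ)
  have h2 := psiK_bound n hε0 hεπ
  have h3 : (0:ℝ) ≤ π + 2 + 4 * n := by positivity
  nlinarith [abs_nonneg (Real.sin ((n : ℝ) * θ)), abs_nonneg (psiK n (2 * Real.arcsin δ))]

lemma kerI_tendsto (n : ℕ) (θ : ℝ) :
    Tendsto (fun δ => kerI n θ δ) (nhdsWithin 0 (Ioi 0))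
      (nhds (2 * π * Real.sin ((n : ℝ) * θ))) := by
  have h1 : Tendsto (fun δ : ℝ => 2 * Real.sin ((n : ℝ) * θ) * psiK n (2 * Real.arcsin δ))
      (nhdsWithin 0 (Ioi 0)) (nhds (2 * Real.sin ((n : ℝ) * θ) * π)) :=
    (psiK_tendsto n).const_mul _
  rw [show 2 * π * Real.sin ((n : ℝ) * θ) = 2 * Real.sin ((n : ℝ) * θ) * π by ring]
  apply h1.congr'
  filter_upwards [Ioo_mem_nhdsGT (by norm_num : (0:ℝ) < 1)] with δ hδ
  exact (kerI_closed n θ hδ.1 hδ.2).symm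



lemma hilbertT_tsum (c : ℕ → ℝ) (hc0 : Summable fun n => |c n|)
    (hc1 : Summable fun n : ℕ => (n : ℝ) * |c n|) (θ : ℝ) :
    hilbertT (fun s => ∑' n : ℕ, c n * Real.cos ((n : ℝ) * s)) θ
      = ∑' n : ℕ, c n * Real.sin ((n : ℝ) * θ) := by
  have hbound_sum : Summable (fun n : ℕ => |c n| * (2 * (π + 2 + 4 * (n : ℝ)))) := by
    have heq : (fun n : ℕ => |c n| * (2 * (π + 2 + 4 * (n : ℝ))))
        = fun n : ℕ => (2 * π + 4) * |c n| + 8 * ((n : ℝ) * |c n|) := funext fun n => by ring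
    rw [heq]
    exact ((hc0.mul_left _).add (hc1.mul_left _))
  have hdom : Tendsto (fun δ : ℝ => ∑' n : ℕ, c n * kerI n θ δ) (nhdsWithin 0 (Ioi 0))
      (nhds (∑' n : ℕ, c n * (2 * π * Real.sin ((n : ℝ) * θ)))) := by
    apply tendsto_tsum_of_dominated_convergence hbound_sum
    · intro k
      exact (kerI_tendsto k θ).const_mul (c k)
    · filter_upwards [Ioo_mem_nhdsGT (by norm_num : (0:ℝ) < 1)] with δ hδ k
      rw [Real.norm_eq_abs, abs_mul]
      exact mul_le_mul_of_nonneg_left (kerI_bound k θ hδ.1 hδ.2) (abs_nonneg _)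
  have hkey : Tendsto (fun δ : ℝ =>
      ∫ s in {s : ℝ | s ∈ Icc 0 (2 * π) ∧ δ ≤ |Real.sin ((θ - s) / 2)|},
        (∑' n : ℕ, c n * Real.cos ((n : ℝ) * s)) * Real.cot ((θ - s) / 2))
      (nhdsWithin 0 (Ioi 0))
      (nhds (∑' n : ℕ, c n * (2 * π * Real.sin ((n : ℝ) * θ)))) := by
    apply hdom.congr'
    filter_upwards [Ioo_mem_nhdsGT (by norm_num : (0:ℝ) < 1)] with δ hδ
    set S : Set ℝ := {s : ℝ | s ∈ Icc 0 (2 * π) ∧ δ ≤ |Real.sin ((θ - s) / 2)|} with hSdef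
    have hSsub : S ⊆ Icc 0 (2 * π) := fun s hs => hs.1
    have hSm : MeasurableSet S := by
      rw [hSdef, show {s : ℝ | s ∈ Icc 0 (2 * π) ∧ δ ≤ |Real.sin ((θ - s) / 2)|}
          = Icc 0 (2 * π) ∩ {s : ℝ | δ ≤ |Real.sin ((θ - s) / 2)|} by ext s; simp [mem_setOf_eq]]
      exact measurableSet_Icc.inter (measurableSet_le measurable_const
        ((Real.measurable_sin.comp ((measurable_const.sub measurable_id).div_const 2)).abs))
    have hSfin : volume S ≠ ⊤ :=
      ((measure_mono hSsub).trans_lt measure_Icc_lt_top).ne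
    have hmeas : ∀ n : ℕ, Measurable fun s : ℝ =>
        c n * (Real.cos ((n : ℝ) * s) * Real.cot ((θ - s) / 2)) := by
      intro n
      exact ((Real.measurable_cos.comp (measurable_id.const_mul _)).mul
        (cot_measurable.comp ((measurable_const.sub measurable_id).div_const 2))).const_mul _
    have hb : ∀ n : ℕ, ∀ s ∈ S, ‖c n * (Real.cos ((n : ℝ) * s) * Real.cot ((θ - s) / 2))‖
        ≤ |c n| * δ⁻¹ := by
      intro n s hs
      rw [Real.norm_eq_abs, abs_mul]
      apply mul_le_mul_of_nonneg_left _ (abs_nonneg _)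
      rw [abs_mul, Real.cot_eq_cos_div_sin, abs_div]
      have h1 : |Real.cos ((θ - s) / 2)| / |Real.sin ((θ - s) / 2)| ≤ 1 / δ :=
        div_le_div₀ zero_le_one (Real.abs_cos_le_one _) hδ.1 hs.2
      calc |Real.cos ((n : ℝ) * s)| * (|Real.cos ((θ - s) / 2)| / |Real.sin ((θ - s) / 2)|)
          ≤ 1 * (1 / δ) :=
            mul_le_mul (Real.abs_cos_le_one _) h1 (by positivity) zero_le_one
        _ = δ⁻¹ := by rw [one_mul, one_div]
    have hFint : ∀ n : ℕ, Integrable (fun s : ℝ =>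
        c n * (Real.cos ((n : ℝ) * s) * Real.cot ((θ - s) / 2))) (volume.restrict S) := by
      intro n
      apply Measure.integrableOn_of_bounded hSfin (hmeas n).aestronglyMeasurable
      exact ae_restrict_of_forall_mem hSm (hb n)
    have hFsum : Summable fun n : ℕ =>
        ∫ s in S, ‖c n * (Real.cos ((n : ℝ) * s) * Real.cot ((θ - s) / 2))‖ := by
      apply Summable.of_nonneg_of_le
        (fun n => integral_nonneg fun s => norm_nonneg _)
        (fun n => ?_) ((hc0.mul_right δ⁻¹).mul_right (volume S).toReal)
      have := norm_setIntegral_le_of_norm_le_const (μ := volume) (s := S)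
        (f := fun s : ℝ => ‖c n * (Real.cos ((n : ℝ) * s) * Real.cot ((θ - s) / 2))‖)
        hSfin.lt_top (C := |c n| * δ⁻¹) (fun x hx => by
          rw [norm_norm]; exact hb n x hx)
      calc ∫ s in S, ‖c n * (Real.cos ((n : ℝ) * s) * Real.cot ((θ - s) / 2))‖
          = ‖∫ s in S, ‖c n * (Real.cos ((n : ℝ) * s) * Real.cot ((θ - s) / 2))‖‖ := by
            rw [Real.norm_eq_abs, abs_of_nonneg (integral_nonneg fun s => norm_nonneg _)]
        _ ≤ |c n| * δ⁻¹ * (volume S).toReal := this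
    calc ∑' n : ℕ, c n * kerI n θ δ
        = ∑' n : ℕ, ∫ s in S, c n * (Real.cos ((n : ℝ) * s) * Real.cot ((θ - s) / 2)) := by
          apply tsum_congr
          intro n
          rw [MeasureTheory.integral_const_mul]
          rfl
      _ = ∫ s in S, ∑' n : ℕ, c n * (Real.cos ((n : ℝ) * s) * Real.cot ((θ - s) / 2)) :=
          integral_tsum_of_summable_integral_norm hFint hFsum
      _ = ∫ s in S, (∑' n : ℕ, c n * Real.cos ((n : ℝ) * s)) * Real.cot ((θ - s) / 2) := by
          apply integral_congr_ae (ae_of_all _ fun s => ?_)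
          rw [← tsum_mul_right]
          exact tsum_congr fun n => by ring
  unfold hilbertT
  rw [hkey.limUnder_eq]
  have h2 : ∑' n : ℕ, c n * (2 * π * Real.sin ((n : ℝ) * θ))
      = (2 * π) * ∑' n : ℕ, c n * Real.sin ((n : ℝ) * θ) := by
    rw [← tsum_mul_left]
    exact tsum_congr fun n => by ring
  rw [h2, ← mul_assoc, one_div, inv_mul_cancel₀ (by positivity : (2 * π : ℝ) ≠ 0), one_mul]

lemma deriv_hilbertT (c : ℕ → ℝ) (hc0 : Summable fun n => |c n|)
    (hc1 : Summable fun n : ℕ => (n : ℝ) * |c n|) (θ : ℝ) :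
    deriv (hilbertT (fun s => ∑' n : ℕ, c n * Real.cos ((n : ℝ) * s))) θ
      = ∑' n : ℕ, (n : ℝ) * c n * Real.cos ((n : ℝ) * θ) := by
  have hfun : hilbertT (fun s => ∑' n : ℕ, c n * Real.cos ((n : ℝ) * s))
      = fun t => ∑' n : ℕ, c n * Real.sin ((n : ℝ) * t) :=
    funext fun t => hilbertT_tsum c hc0 hc1 t
  rw [hfun]
  have hderiv : ∀ (n : ℕ) (y : ℝ), HasDerivAt (fun t => c n * Real.sin ((n : ℝ) * t))
      (c n * ((n : ℝ) * Real.cos ((n : ℝ) * y))) y := by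
    intro n y
    have h1 : HasDerivAt (fun t : ℝ => (n : ℝ) * t) (n : ℝ) y := by
      simpa using (hasDerivAt_id y).const_mul (n : ℝ)
    have h2 := (Real.hasDerivAt_sin ((n : ℝ) * y)).comp y h1
    have h3 := h2.const_mul (c n)
    have h4 : c n * ((n : ℝ) * Real.cos ((n : ℝ) * y)) = c n * (Real.cos ((n : ℝ) * y) * (n : ℝ)) := by
      ring
    rw [h4]
    exact h3
  have hg : ∀ n : ℕ, Differentiable ℝ (fun t => c n * Real.sin ((n : ℝ) * t)) :=
    fun n y => (hderiv n y).differentiableAt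
  have hderiv' : ∀ (n : ℕ) (y : ℝ), deriv (fun t => c n * Real.sin ((n : ℝ) * t)) y
      = c n * ((n : ℝ) * Real.cos ((n : ℝ) * y)) := fun n y => (hderiv n y).deriv
  have hbound : ∀ (n : ℕ) (y : ℝ), ‖deriv (fun t => c n * Real.sin ((n : ℝ) * t)) y‖
      ≤ (n : ℝ) * |c n| := by
    intro n y
    rw [hderiv', Real.norm_eq_abs, abs_mul, abs_mul]
    have h1 := Real.abs_cos_le_one ((n : ℝ) * y)
    have h2 : |(n : ℝ)| = (n : ℝ) := abs_of_nonneg (Nat.cast_nonneg n)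
    rw [h2]
    calc |c n| * ((n : ℝ) * |Real.cos ((n : ℝ) * y)|)
        = (n : ℝ) * (|c n| * |Real.cos ((n : ℝ) * y)|) := by ring
      _ ≤ (n : ℝ) * (|c n| * 1) := by
          apply mul_le_mul_of_nonneg_left _ (Nat.cast_nonneg n)
          exact mul_le_mul_of_nonneg_left h1 (abs_nonneg _)
      _ = (n : ℝ) * |c n| := by ring
  have hsum0 : Summable fun n : ℕ => c n * Real.sin ((n : ℝ) * (0 : ℝ)) :=
    summable_zero.congr fun n => by simp
  rw [deriv_tsum_apply hc1 hg hbound hsum0]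
  exact tsum_congr fun n => by rw [hderiv']; ring

-- norm facts
lemma norm_wc (θ : ℝ) : ‖wc θ‖ = 1 := by
  rw [wc, Complex.norm_exp_ofReal_mul_I]

lemma norm_wc_pow (θ : ℝ) (k : ℕ) : ‖wc θ ^ k‖ = 1 := by
  rw [norm_pow, norm_wc, one_pow]

lemma wc_pow_eq (θ : ℝ) (k : ℕ) : wc θ ^ k = Complex.exp ((((k : ℝ) * θ : ℝ) : ℂ) * Complex.I) := by
  rw [wc, ← Complex.exp_nat_mul]
  congr 1
  push_cast
  ring

section main
variable (a : ℕ → ℝ)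

-- re of hDD type series
lemma reP1 (ha : Summable fun n : ℕ => |a n * ((n : ℝ) + 1) * n|) (s : ℝ) :
    (wc s * hDD a s).re
      = ∑' n : ℕ, (a n * ((n : ℝ) + 1) * n) * Real.cos ((n : ℝ) * s) := by
  have hterm : ∀ n : ℕ, wc s * ((a n : ℂ) * ((n : ℂ) + 1) * (n : ℂ) * wc s ^ (n - 1))
      = ((a n * ((n : ℝ) + 1) * n : ℝ) : ℂ)
          * Complex.exp ((((n : ℝ) * s : ℝ) : ℂ) * Complex.I) := by
    intro n
    cases n with
    | zero => push_cast; ring_nf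
    | succ m =>
        rw [show (m + 1) - 1 = m from rfl, ← wc_pow_eq]
        have : wc s * ((a (m+1) : ℂ) * (((m+1 : ℕ) : ℂ) + 1) * ((m+1 : ℕ) : ℂ) * wc s ^ m)
            = ((a (m+1) : ℂ) * (((m+1 : ℕ) : ℂ) + 1) * ((m+1 : ℕ) : ℂ)) * (wc s ^ m * wc s) := by
          ring
        rw [this, ← pow_succ]
        congr 1
        push_cast
        ring
  have hsummable : Summable fun n : ℕ => ((a n * ((n : ℝ) + 1) * n : ℝ) : ℂ)
      * Complex.exp ((((n : ℝ) * s : ℝ) : ℂ) * Complex.I) := by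
    apply Summable.of_norm
    apply Summable.congr ha
    intro n
    rw [norm_mul, Complex.norm_real, Complex.norm_exp_ofReal_mul_I,
      mul_one, Real.norm_eq_abs]
  rw [hDD, ← tsum_mul_left]
  rw [tsum_congr hterm, Complex.re_tsum hsummable]
  exact tsum_congr fun n => by
    rw [Complex.re_ofReal_mul, Complex.exp_ofReal_mul_I_re]

lemma reP2 (ha : Summable fun n : ℕ => |a n * ((n : ℝ) + 1)|) (s : ℝ) :
    (hD a s).re = ∑' n : ℕ, (a n * ((n : ℝ) + 1)) * Real.cos ((n : ℝ) * s) := by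
  have hterm : ∀ n : ℕ, (a n : ℂ) * ((n : ℂ) + 1) * wc s ^ n
      = ((a n * ((n : ℝ) + 1) : ℝ) : ℂ)
          * Complex.exp ((((n : ℝ) * s : ℝ) : ℂ) * Complex.I) := by
    intro n
    rw [wc_pow_eq]
    congr 1
    push_cast
    ring
  have hsummable : Summable fun n : ℕ => ((a n * ((n : ℝ) + 1) : ℝ) : ℂ)
      * Complex.exp ((((n : ℝ) * s : ℝ) : ℂ) * Complex.I) := by
    apply Summable.of_norm
    apply Summable.congr ha
    intro n
    rw [norm_mul, Complex.norm_real, Complex.norm_exp_ofReal_mul_I,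
      mul_one, Real.norm_eq_abs]
  rw [hD, tsum_congr hterm, Complex.re_tsum hsummable]
  exact tsum_congr fun n => by
    rw [Complex.re_ofReal_mul, Complex.exp_ofReal_mul_I_re]

lemma reP3 (ha : Summable fun n : ℕ => |a n|) (s : ℝ) :
    (Complex.exp (-(s : ℂ) * Complex.I) * hMap a s).re
      = ∑' n : ℕ, a n * Real.cos ((n : ℝ) * s) := by
  have hterm : ∀ n : ℕ, Complex.exp (-(s : ℂ) * Complex.I) * ((a n : ℂ) * wc s ^ (n + 1))
      = ((a n : ℝ) : ℂ) * Complex.exp ((((n : ℝ) * s : ℝ) : ℂ) * Complex.I) := by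
    intro n
    rw [wc_pow_eq]
    rw [show Complex.exp (-(s : ℂ) * Complex.I) * ((a n : ℂ)
        * Complex.exp (((((n + 1 : ℕ) : ℝ) * s : ℝ) : ℂ) * Complex.I))
      = (a n : ℂ) * (Complex.exp (-(s : ℂ) * Complex.I)
        * Complex.exp (((((n + 1 : ℕ) : ℝ) * s : ℝ) : ℂ) * Complex.I)) by ring]
    rw [← Complex.exp_add]
    congr 2
    push_cast
    ring
  have hsummable : Summable fun n : ℕ => ((a n : ℝ) : ℂ)
      * Complex.exp ((((n : ℝ) * s : ℝ) : ℂ) * Complex.I) := by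
    apply Summable.of_norm
    apply Summable.congr ha
    intro n
    rw [norm_mul, Complex.norm_real, Complex.norm_exp_ofReal_mul_I,
      mul_one, Real.norm_eq_abs]
  rw [hMap, ← tsum_mul_left, tsum_congr hterm, Complex.re_tsum hsummable]
  exact tsum_congr fun n => by
    rw [Complex.re_ofReal_mul, Complex.exp_ofReal_mul_I_re]

lemma reP4 (ha : Summable fun n : ℕ => |a n|) (θ : ℝ) :
    (wc θ * (starRingEnd ℂ) (hMap a θ)).re = ∑' n : ℕ, a n * Real.cos ((n : ℝ) * θ) := by
  have hterm : ∀ n : ℕ, (a n : ℂ) * wc θ ^ (n + 1)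
      = ((a n : ℝ) : ℂ) * Complex.exp (((((n : ℝ) + 1) * θ : ℝ) : ℂ) * Complex.I) := by
    intro n
    rw [wc_pow_eq]
    congr 2
    push_cast
    ring
  have hsummable : Summable fun n : ℕ => ((a n : ℝ) : ℂ)
      * Complex.exp (((((n : ℝ) + 1) * θ : ℝ) : ℂ) * Complex.I) := by
    apply Summable.of_norm
    apply Summable.congr ha
    intro n
    rw [norm_mul, Complex.norm_real, Complex.norm_exp_ofReal_mul_I,
      mul_one, Real.norm_eq_abs]
  have hre : (hMap a θ).re = ∑' n : ℕ, a n * Real.cos (((n : ℝ) + 1) * θ) := by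
    rw [hMap, tsum_congr hterm, Complex.re_tsum hsummable]
    exact tsum_congr fun n => by
      rw [Complex.re_ofReal_mul, Complex.exp_ofReal_mul_I_re]
  have him : (hMap a θ).im = ∑' n : ℕ, a n * Real.sin (((n : ℝ) + 1) * θ) := by
    rw [hMap, tsum_congr hterm, Complex.im_tsum hsummable]
    exact tsum_congr fun n => by
      rw [Complex.im_ofReal_mul, Complex.exp_ofReal_mul_I_im]
  have hsumcos : Summable fun n : ℕ => a n * Real.cos (((n : ℝ) + 1) * θ) := by
    apply Summable.of_norm_bounded ha
    intro n
    rw [Real.norm_eq_abs, abs_mul]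
    exact mul_le_of_le_one_right (abs_nonneg _) (Real.abs_cos_le_one _)
  have hsumsin : Summable fun n : ℕ => a n * Real.sin (((n : ℝ) + 1) * θ) := by
    apply Summable.of_norm_bounded ha
    intro n
    rw [Real.norm_eq_abs, abs_mul]
    exact mul_le_of_le_one_right (abs_nonneg _) (Real.abs_sin_le_one _)
  rw [Complex.mul_re, Complex.conj_re, Complex.conj_im, hre, him]
  have hwre : (wc θ).re = Real.cos θ := Complex.exp_ofReal_mul_I_re θ
  have hwim : (wc θ).im = Real.sin θ := Complex.exp_ofReal_mul_I_im θ
  rw [hwre, hwim]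
  rw [mul_neg, sub_neg_eq_add, ← tsum_mul_left, ← tsum_mul_left,
    ← Summable.tsum_add (hsumcos.mul_left _) (hsumsin.mul_left _)]
  apply tsum_congr
  intro n
  rw [show (n : ℝ) * θ = ((n : ℝ) + 1) * θ - θ by ring, Real.cos_sub]
  ring

end main


section assembly
variable {a : ℕ → ℝ}

lemma summable_of_cube (hsum : Summable fun n : ℕ => (n : ℝ) ^ 3 * |a n|)
    (g : ℕ → ℝ) (C : ℝ) (h : ∀ n, |g n| ≤ C * ((n : ℝ) ^ 3 * |a n|)) : Summable g :=
  Summable.of_norm_bounded (hsum.mul_left C) fun n => by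
    rw [Real.norm_eq_abs]; exact h n

lemma cube_facts (m : ℕ) : (1 : ℝ) ≤ ((m : ℝ) + 1)
    ∧ ((m : ℝ) + 1) ≤ ((m : ℝ) + 1) ^ 2 ∧ ((m : ℝ) + 1) ^ 2 ≤ ((m : ℝ) + 1) ^ 3 := by
  have h0 : (0 : ℝ) ≤ (m : ℝ) := Nat.cast_nonneg m
  refine ⟨by linarith, by nlinarith, by nlinarith⟩

lemma sumF (d : ℕ → ℝ) (hd : Summable fun n => |d n|) (r θ : ℝ) :
    Summable fun n : ℕ => r * (d n * Real.cos ((n : ℝ) * θ)) :=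
  Summable.of_norm_bounded (hd.mul_left |r|) fun n => by
    rw [Real.norm_eq_abs, abs_mul, abs_mul]
    exact mul_le_mul_of_nonneg_left
      (mul_le_of_le_one_right (abs_nonneg _) (Real.abs_cos_le_one _)) (abs_nonneg r)

lemma coeff_id (β : ℝ) (ha0 : a 0 = 0) (n : ℕ) (θ : ℝ) :
    β / 4 * ((n : ℝ) * (a n * ((n : ℝ) + 1) * (n : ℝ)) * Real.cos ((n : ℝ) * θ))
      - β / 4 * ((n : ℝ) * (a n * ((n : ℝ) + 1)) * Real.cos ((n : ℝ) * θ))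
      - 1 / 2 * ((n : ℝ) * a n * Real.cos ((n : ℝ) * θ))
      + 1 / 2 * (a n * Real.cos ((n : ℝ) * θ))
      = 1 / 4 * (a n * (n : ℝ) * ((n : ℝ) + 1) * ((n : ℝ) - 1)
          * (β - 2 / ((n : ℝ) * ((n : ℝ) + 1))) * Real.cos ((n : ℝ) * θ)) := by
  rcases n with _ | m
  · simp [ha0]
  · have h0 : (0 : ℝ) ≤ (m : ℝ) := Nat.cast_nonneg m
    have hx : ((m : ℕ) + 1 : ℝ) ≠ 0 := by push_cast; linarith
    push_cast
    have hx1 : ((m : ℝ) + 1) ≠ 0 := by linarith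
    have hx2 : ((m : ℝ) + 1 + 1) ≠ 0 := by linarith
    field_simp
    ring

end assembly

/-- The linearization of the traveling-wave functional at the trivial solution:
`L[β](λ₁,λ₂,h)(θ) = (1/2)λ₁ + λ₂ cos θ + (β/4) ∂_θ H[Re(w h''(w))](θ)
 - (β/4) ∂_θ H[Re(h'(w))](θ) - (1/2) ∂_θ H[Re(w̄ h(w))](θ) + (1/2) Re[w conj(h(w))]`. -/
noncomputable def Lop (β lam1 lam2 : ℝ) (a : ℕ → ℝ) (θ : ℝ) : ℝ :=
  1 / 2 * lam1 + lam2 * Real.cos θ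
    + β / 4 * deriv (hilbertT fun s => (wc s * hDD a s).re) θ
    - β / 4 * deriv (hilbertT fun s => (hD a s).re) θ
    - 1 / 2 * deriv (hilbertT fun s => (Complex.exp (-(s : ℂ) * Complex.I) * hMap a s).re) θ
    + 1 / 2 * (wc θ * (starRingEnd ℂ) (hMap a θ)).re


/-- Fourier representation of the linearized operator:
`L[β](λ₁,λ₂,h)(θ) = (1/2)λ₁ + λ₂ cos θ
  + (1/4) ∑_{n≥2} a_n n(n+1)(n-1)(β - β_n) cos(nθ)`, with `β_n = 2/(n(n+1))`. -/
theorem Lop_fourier (β lam1 lam2 : ℝ) (a : ℕ → ℝ) (ha0 : a 0 = 0) (ha1 : a 1 = 0)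
    (hsum : Summable fun n : ℕ => (n : ℝ) ^ 3 * |a n|) :
    ∀ θ : ℝ,
      Lop β lam1 lam2 a θ
        = 1 / 2 * lam1 + lam2 * Real.cos θ
          + 1 / 4 * ∑' n : ℕ,
              a n * (n : ℝ) * ((n : ℝ) + 1) * ((n : ℝ) - 1)
                * (β - 2 / ((n : ℝ) * ((n : ℝ) + 1))) * Real.cos ((n : ℝ) * θ) := by
  intro θ
  -- summability facts
  have hA : Summable fun n : ℕ => |a n| := by
    apply summable_of_cube hsum _ 1
    intro n
    rcases n with _ | m
    · simp [ha0]
    · obtain ⟨f1, f2, f3⟩ := cube_facts m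
      have h := abs_nonneg (a (m + 1))
      simp only [abs_abs]
      push_cast
      nlinarith
  have hA' : Summable fun n : ℕ => (n : ℝ) * |a n| := by
    apply summable_of_cube hsum _ 1
    intro n
    rcases n with _ | m
    · simp
    · obtain ⟨f1, f2, f3⟩ := cube_facts m
      have h := abs_nonneg (a (m + 1))
      simp only [abs_mul, abs_abs, Nat.abs_cast]
      push_cast
      nlinarith
  have hB1 : Summable fun n : ℕ => |a n * ((n : ℝ) + 1) * (n : ℝ)| := by
    apply summable_of_cube hsum _ 2
    intro n
    rcases n with _ | m
    · simp
    · obtain ⟨f1, f2, f3⟩ := cube_facts m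
      have h := abs_nonneg (a (m + 1))
      simp only [abs_mul, abs_abs, Nat.abs_cast]
      rw [abs_of_nonneg (by positivity : (0:ℝ) ≤ ((m + 1 : ℕ) : ℝ) + 1)]
      push_cast
      nlinarith
  have hB1' : Summable fun n : ℕ => (n : ℝ) * |a n * ((n : ℝ) + 1) * (n : ℝ)| := by
    apply summable_of_cube hsum _ 2
    intro n
    rcases n with _ | m
    · simp
    · obtain ⟨f1, f2, f3⟩ := cube_facts m
      have h := abs_nonneg (a (m + 1))
      simp only [abs_mul, abs_abs, Nat.abs_cast]
      rw [abs_of_nonneg (by positivity : (0:ℝ) ≤ ((m + 1 : ℕ) : ℝ) + 1)]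
      push_cast
      nlinarith
  have hB2 : Summable fun n : ℕ => |a n * ((n : ℝ) + 1)| := by
    apply summable_of_cube hsum _ 2
    intro n
    rcases n with _ | m
    · simp [ha0]
    · obtain ⟨f1, f2, f3⟩ := cube_facts m
      have h := abs_nonneg (a (m + 1))
      simp only [abs_mul, abs_abs, Nat.abs_cast]
      rw [abs_of_nonneg (by positivity : (0:ℝ) ≤ ((m + 1 : ℕ) : ℝ) + 1)]
      push_cast
      nlinarith
  have hB2' : Summable fun n : ℕ => (n : ℝ) * |a n * ((n : ℝ) + 1)| := by
    apply summable_of_cube hsum _ 2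
    intro n
    rcases n with _ | m
    · simp
    · obtain ⟨f1, f2, f3⟩ := cube_facts m
      have h := abs_nonneg (a (m + 1))
      simp only [abs_mul, abs_abs, Nat.abs_cast]
      rw [abs_of_nonneg (by positivity : (0:ℝ) ≤ ((m + 1 : ℕ) : ℝ) + 1)]
      push_cast
      nlinarith
  -- the three Hilbert-transform derivative computations
  have h1 : deriv (hilbertT fun s => (wc s * hDD a s).re) θ
      = ∑' n : ℕ, (n : ℝ) * (a n * ((n : ℝ) + 1) * (n : ℝ)) * Real.cos ((n : ℝ) * θ) := by
    have hfun : (fun s => (wc s * hDD a s).re)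
        = fun s => ∑' n : ℕ, (a n * ((n : ℝ) + 1) * (n : ℝ)) * Real.cos ((n : ℝ) * s) :=
      funext fun s => reP1 a hB1 s
    rw [hfun]
    exact deriv_hilbertT (fun n => a n * ((n : ℝ) + 1) * (n : ℝ)) hB1 hB1' θ
  have h2 : deriv (hilbertT fun s => (hD a s).re) θ
      = ∑' n : ℕ, (n : ℝ) * (a n * ((n : ℝ) + 1)) * Real.cos ((n : ℝ) * θ) := by
    have hfun : (fun s => (hD a s).re)
        = fun s => ∑' n : ℕ, (a n * ((n : ℝ) + 1)) * Real.cos ((n : ℝ) * s) :=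
      funext fun s => reP2 a hB2 s
    rw [hfun]
    exact deriv_hilbertT (fun n => a n * ((n : ℝ) + 1)) hB2 hB2' θ
  have h3 : deriv (hilbertT fun s => (Complex.exp (-(s : ℂ) * Complex.I) * hMap a s).re) θ
      = ∑' n : ℕ, (n : ℝ) * a n * Real.cos ((n : ℝ) * θ) := by
    have hfun : (fun s : ℝ => (Complex.exp (-(s : ℂ) * Complex.I) * hMap a s).re)
        = fun s => ∑' n : ℕ, a n * Real.cos ((n : ℝ) * s) :=
      funext fun s => reP3 a hA s
    rw [hfun]
    exact deriv_hilbertT a hA hA' θ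
  have h4 : (wc θ * (starRingEnd ℂ) (hMap a θ)).re = ∑' n : ℕ, a n * Real.cos ((n : ℝ) * θ) :=
    reP4 a hA θ
  unfold Lop
  rw [h1, h2, h3, h4]
  -- now pure series algebra
  have s1 : Summable fun n : ℕ =>
      β / 4 * ((n : ℝ) * (a n * ((n : ℝ) + 1) * (n : ℝ)) * Real.cos ((n : ℝ) * θ)) := by
    apply sumF (fun n : ℕ => (n : ℝ) * (a n * ((n : ℝ) + 1) * (n : ℝ))) ?_ (β / 4) θ
    apply Summable.congr hB1'
    intro n
    show (n : ℝ) * |a n * ((n : ℝ) + 1) * (n : ℝ)| = |(n : ℝ) * (a n * ((n : ℝ) + 1) * (n : ℝ))|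
    simp only [abs_mul, Nat.abs_cast]
  have s2 : Summable fun n : ℕ =>
      β / 4 * ((n : ℝ) * (a n * ((n : ℝ) + 1)) * Real.cos ((n : ℝ) * θ)) := by
    apply sumF (fun n : ℕ => (n : ℝ) * (a n * ((n : ℝ) + 1))) ?_ (β / 4) θ
    apply Summable.congr hB2'
    intro n
    show (n : ℝ) * |a n * ((n : ℝ) + 1)| = |(n : ℝ) * (a n * ((n : ℝ) + 1))|
    simp only [abs_mul, Nat.abs_cast]
  have s3 : Summable fun n : ℕ =>
      1 / 2 * ((n : ℝ) * a n * Real.cos ((n : ℝ) * θ)) := by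
    apply sumF (fun n : ℕ => (n : ℝ) * a n) ?_ (1 / 2) θ
    apply Summable.congr hA'
    intro n
    show (n : ℝ) * |a n| = |(n : ℝ) * a n|
    simp only [abs_mul, Nat.abs_cast]
  have s4 : Summable fun n : ℕ => 1 / 2 * (a n * Real.cos ((n : ℝ) * θ)) :=
    sumF a hA (1 / 2) θ
  have key : β / 4 * (∑' n : ℕ, (n : ℝ) * (a n * ((n : ℝ) + 1) * (n : ℝ)) * Real.cos ((n : ℝ) * θ))
      - β / 4 * (∑' n : ℕ, (n : ℝ) * (a n * ((n : ℝ) + 1)) * Real.cos ((n : ℝ) * θ))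
      - 1 / 2 * (∑' n : ℕ, (n : ℝ) * a n * Real.cos ((n : ℝ) * θ))
      + 1 / 2 * (∑' n : ℕ, a n * Real.cos ((n : ℝ) * θ))
      = 1 / 4 * ∑' n : ℕ, a n * (n : ℝ) * ((n : ℝ) + 1) * ((n : ℝ) - 1)
          * (β - 2 / ((n : ℝ) * ((n : ℝ) + 1))) * Real.cos ((n : ℝ) * θ) := by
    rw [← tsum_mul_left (a := β / 4), ← tsum_mul_left (a := β / 4),
      ← tsum_mul_left (a := (1 : ℝ) / 2), ← tsum_mul_left (a := (1 : ℝ) / 2),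
      ← Summable.tsum_sub s1 s2, ← Summable.tsum_sub (s1.sub s2) s3, ← Summable.tsum_add ((s1.sub s2).sub s3) s4,
      tsum_congr (fun n => coeff_id β ha0 n θ), tsum_mul_left]
  linarith [key]
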